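/- Let f : 𝕋 → ℝ be continuous on the circle 𝕋 = ℝ/ℤ with 0 ≤ f ≤ 1, and let n(y) denote the number (possibly infinite) of solutions x ∈ 𝕋 of f(x) = y. If ∫_0^1 (log(n(y)))^{1/2} dy < ∞ (the integrand interpreted as 0 when n(y) ≤ 1 and +∞ when n(y) = ∞), then ω(f,t)_1 = O((log(1/t))^{-1/2}) as t → 0+, i.e. there exist C > 0 and t₀ ∈ (0,1) such that ω(f,t)_1 ≤ C·(log(1/t))^{-1/2} for all t ∈ (0,t₀]. -/

import Mathlib

open MeasureTheory Set Classical
open scoped ENNReal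

/-- The `L^p` modulus of continuity `ω(f,t)_p` on the circle `𝕋 = ℝ/ℤ`. -/
noncomputable def modulus (f : AddCircle (1:ℝ) → ℝ) (p t : ℝ) : ℝ :=
  ⨆ h : {h : ℝ // |h| ≤ t},
    (∫ x : AddCircle (1:ℝ), |f (x + ((h.1 : ℝ) : AddCircle (1:ℝ))) - f x| ^ p) ^ (1/p)


lemma slice_set_eq {a b : ℝ} (h : b ≤ a) : {y : ℝ | (y < a) ≠ (y < b)} = Ico b a := by
  ext y
  simp only [mem_setOf_eq, mem_Ico, ne_eq, eq_iff_iff]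
  constructor
  · intro hy
    by_cases h1 : y < a <;> by_cases h2 : y < b <;> simp_all <;> constructor <;> linarith
  · rintro ⟨h1, h2⟩
    simp [h2, not_lt.2 h1]

lemma slice_vol {a b : ℝ} (ha0 : 0 ≤ a) (ha1 : a ≤ 1) (hb0 : 0 ≤ b) (hb1 : b ≤ 1) :
    volume (Ioo (0:ℝ) 1 ∩ {y : ℝ | (y < a) ≠ (y < b)}) = ENNReal.ofReal |a - b| := by
  wlog hab : b ≤ a with H
  · have h' : {y : ℝ | (y < a) ≠ (y < b)} = {y : ℝ | (y < b) ≠ (y < a)} := by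
      ext y
      constructor <;> exact fun h => h.symm
    rw [h', abs_sub_comm]
    exact H hb0 hb1 ha0 ha1 (le_of_not_ge hab)
  rw [slice_set_eq hab, abs_of_nonneg (by linarith)]
  apply le_antisymm
  · calc volume (Ioo (0:ℝ) 1 ∩ Ico b a) ≤ volume (Ico b a) :=
        measure_mono inter_subset_right
      _ = ENNReal.ofReal (a - b) := Real.volume_Ico
  · calc ENNReal.ofReal (a - b) = volume (Ioo b a) := Real.volume_Ioo.symm
      _ ≤ volume (Ioo (0:ℝ) 1 ∩ Ico b a) := measure_mono (fun y hy => ⟨⟨by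
            have := hy.1; linarith, lt_of_lt_of_le hy.2 ha1⟩, le_of_lt hy.1, hy.2⟩)

lemma exists_level (f : AddCircle (1:ℝ) → ℝ) (hf : Continuous f) (y h : ℝ) (x : AddCircle (1:ℝ))
    (hx : (y < f (x + ((h : ℝ) : AddCircle (1:ℝ)))) ≠ (y < f x)) :
    ∃ z : AddCircle (1:ℝ), f z = y ∧ dist x z ≤ |h| := by
  set g : ℝ → ℝ := fun s => f (x + ((s * h : ℝ) : AddCircle (1:ℝ))) with hgdef
  have hgc : Continuous g := by
    apply hf.comp
    exact continuous_const.add ((AddCircle.continuous_mk' 1).comp (continuous_mul_right h))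
  have hg0 : g 0 = f x := by simp [hgdef]
  have hg1 : g 1 = f (x + ((h : ℝ) : AddCircle (1:ℝ))) := by simp [hgdef]
  have hy : y ∈ uIcc (g 0) (g 1) := by
    rw [hg0, hg1]
    by_cases h1 : y < f (x + ((h : ℝ) : AddCircle (1:ℝ)))
    · have h2 : ¬ (y < f x) := fun h2 => hx (by simp [h1, h2])
      exact mem_uIcc.2 (Or.inl ⟨le_of_not_gt h2, le_of_lt h1⟩)
    · have h2 : y < f x := by
        by_contra h2
        exact hx (by simp [h1, h2])
      exact mem_uIcc.2 (Or.inr ⟨le_of_not_gt h1, le_of_lt h2⟩)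
  obtain ⟨s, hs, hgs⟩ := intermediate_value_uIcc hgc.continuousOn hy
  refine ⟨x + ((s * h : ℝ) : AddCircle (1:ℝ)), hgs, ?_⟩
  rw [uIcc_of_le zero_le_one] at hs
  have h1 : dist x (x + ((s * h : ℝ) : AddCircle (1:ℝ))) = ‖((s * h : ℝ) : AddCircle (1:ℝ))‖ := by
    rw [dist_eq_norm]
    simp [norm_neg]
  rw [h1]
  calc ‖((s * h : ℝ) : AddCircle (1:ℝ))‖ ≤ ‖s * h‖ := QuotientAddGroup.norm_mk_le_norm
    _ = |s| * |h| := by rw [Real.norm_eq_abs, abs_mul]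
    _ ≤ 1 * |h| := by
        apply mul_le_mul_of_nonneg_right _ (abs_nonneg h)
        rw [abs_le]; exact ⟨by linarith [hs.1], hs.2⟩
    _ = |h| := one_mul _

lemma measure_diff_le (f : AddCircle (1:ℝ) → ℝ) (hf : Continuous f) (y h t : ℝ) (ht : |h| ≤ t)
    (hS : {x : AddCircle (1:ℝ) | f x = y}.Finite) :
    volume {x : AddCircle (1:ℝ) | (y < f (x + ((h : ℝ) : AddCircle (1:ℝ)))) ≠ (y < f x)}
      ≤ ({x : AddCircle (1:ℝ) | f x = y}.ncard : ℝ≥0∞) * ENNReal.ofReal (2 * t) := by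
  have hsub : {x : AddCircle (1:ℝ) | (y < f (x + ((h : ℝ) : AddCircle (1:ℝ)))) ≠ (y < f x)}
      ⊆ ⋃ z ∈ hS.toFinset, Metric.closedBall z t := by
    intro x hx
    obtain ⟨z, hz, hdz⟩ := exists_level f hf y h x hx
    exact mem_biUnion (hS.mem_toFinset.2 hz) (Metric.mem_closedBall.2 (hdz.trans ht))
  calc volume {x : AddCircle (1:ℝ) | (y < f (x + ((h : ℝ) : AddCircle (1:ℝ)))) ≠ (y < f x)}
      ≤ volume (⋃ z ∈ hS.toFinset, Metric.closedBall z t) := measure_mono hsub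
    _ ≤ ∑ z ∈ hS.toFinset, volume (Metric.closedBall z t) := measure_biUnion_finset_le _ _
    _ ≤ ∑ z ∈ hS.toFinset, ENNReal.ofReal (2 * t) := by
        refine Finset.sum_le_sum fun z _ => ?_
        rw [AddCircle.volume_closedBall]
        exact ENNReal.ofReal_le_ofReal (min_le_right _ _)
    _ = ({x : AddCircle (1:ℝ) | f x = y}.ncard : ℝ≥0∞) * ENNReal.ofReal (2 * t) := by
        rw [Finset.sum_const, nsmul_eq_mul, Set.ncard_eq_toFinset_card _ hS]

lemma slice_comm (a b : ℝ) : {y : ℝ | (y < a) ≠ (y < b)} = {y : ℝ | (y < b) ≠ (y < a)} := by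
  ext y; exact ⟨Ne.symm, Ne.symm⟩

lemma slice_meas (a b : ℝ) : MeasurableSet {y : ℝ | (y < a) ≠ (y < b)} := by
  rcases le_total b a with hab | hab
  · rw [slice_set_eq hab]; exact measurableSet_Ico
  · rw [slice_comm, slice_set_eq hab]; exact measurableSet_Ico

lemma key_bound (f : AddCircle (1:ℝ) → ℝ) (hf : Continuous f)
    (hf0 : ∀ x, 0 ≤ f x) (hf1 : ∀ x, f x ≤ 1) (t h : ℝ) (ht0 : 0 < t) (ht1 : t ≤ 1/100)
    (hht : |h| ≤ t) :
    ENNReal.ofReal (∫ x : AddCircle (1:ℝ), |f (x + ((h : ℝ) : AddCircle (1:ℝ))) - f x|)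
      ≤ (∫⁻ y in Set.Ioo (0:ℝ) 1,
          (if {x : AddCircle (1:ℝ) | f x = y}.Infinite then ⊤
           else ENNReal.ofReal (Real.sqrt (Real.log ({x : AddCircle (1:ℝ) | f x = y}.ncard)))))
        * (ENNReal.ofReal (Real.sqrt ((1/2) * Real.log (1/t))))⁻¹
        + ENNReal.ofReal (2 * Real.sqrt t) := by
  set h' : AddCircle (1:ℝ) := ((h : ℝ) : AddCircle (1:ℝ)) with hh'
  set c : ℝ≥0∞ := ENNReal.ofReal (Real.sqrt ((1/2) * Real.log (1/t))) with hc
  set w : ℝ → ℝ≥0∞ := fun y =>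
    (if {x : AddCircle (1:ℝ) | f x = y}.Infinite then ⊤
     else ENNReal.ofReal (Real.sqrt (Real.log ({x : AddCircle (1:ℝ) | f x = y}.ncard)))) with hw
  have hL : 0 < Real.log (1/t) := by
    apply Real.log_pos
    rw [lt_div_iff₀ ht0]; linarith
  have hc0 : c ≠ 0 := by
    rw [hc, ne_eq, ENNReal.ofReal_eq_zero, not_le]
    exact Real.sqrt_pos.2 (by linarith)
  -- measurable product set
  set A : Set (AddCircle (1:ℝ) × ℝ) := {p | (p.2 < f (p.1 + h')) ≠ (p.2 < f p.1)} with hA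
  have hAm : MeasurableSet A := by
    have hU : IsOpen {p : AddCircle (1:ℝ) × ℝ | p.2 < f (p.1 + h')} :=
      isOpen_lt continuous_snd (hf.comp (continuous_fst.add continuous_const))
    have hV : IsOpen {p : AddCircle (1:ℝ) × ℝ | p.2 < f p.1} :=
      isOpen_lt continuous_snd (hf.comp continuous_fst)
    have : A = ({p : AddCircle (1:ℝ) × ℝ | p.2 < f (p.1 + h')} \
          {p : AddCircle (1:ℝ) × ℝ | p.2 < f p.1}) ∪
          ({p : AddCircle (1:ℝ) × ℝ | p.2 < f p.1} \
          {p : AddCircle (1:ℝ) × ℝ | p.2 < f (p.1 + h')}) := by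
      ext p
      simp only [hA, mem_setOf_eq, ne_eq, eq_iff_iff, mem_union, mem_diff, mem_setOf_eq]
      tauto
    rw [this]
    exact ((hU.measurableSet.diff hV.measurableSet).union
      (hV.measurableSet.diff hU.measurableSet))
  have hslice : ∀ y : ℝ, MeasurableSet {x : AddCircle (1:ℝ) | (y < f (x + h')) ≠ (y < f x)} :=
    fun y => hAm.preimage (measurable_id.prodMk measurable_const)
  -- integrability
  have hφc : Continuous fun x : AddCircle (1:ℝ) => |f (x + h') - f x| :=
    ((hf.comp (continuous_id.add continuous_const)).sub hf).abs
  have hφi : Integrable (fun x : AddCircle (1:ℝ) => |f (x + h') - f x|) volume :=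
    hφc.integrable_of_hasCompactSupport ((isClosed_tsupport _).isCompact)
  -- step 1: to lintegral
  rw [ofReal_integral_eq_lintegral_ofReal hφi (ae_of_all _ fun x => abs_nonneg _)]
  -- step 2: layer cake + Tonelli
  have step2 : (∫⁻ x : AddCircle (1:ℝ), ENNReal.ofReal |f (x + h') - f x|)
      = ∫⁻ y in Set.Ioo (0:ℝ) 1,
          volume {x : AddCircle (1:ℝ) | (y < f (x + h')) ≠ (y < f x)} := by
    have e1 : ∀ x : AddCircle (1:ℝ), ENNReal.ofReal |f (x + h') - f x|
        = ∫⁻ y in Set.Ioo (0:ℝ) 1,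
            ({y' : ℝ | (y' < f (x + h')) ≠ (y' < f x)}).indicator (fun _ => 1) y := by
      intro x
      rw [setLIntegral_indicator (slice_meas _ _) (fun _ => (1:ℝ≥0∞)), setLIntegral_one,
        inter_comm]
      exact (slice_vol (hf0 _) (hf1 _) (hf0 x) (hf1 x)).symm
    simp_rw [e1]
    rw [lintegral_lintegral_swap]
    · apply lintegral_congr fun y => ?_
      have e2 : ∀ x : AddCircle (1:ℝ),
          ({y' : ℝ | (y' < f (x + h')) ≠ (y' < f x)}).indicator (fun _ => (1:ℝ≥0∞)) y
          = ({x' : AddCircle (1:ℝ) | (y < f (x' + h')) ≠ (y < f x')}).indicator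
              (fun _ => (1:ℝ≥0∞)) x := by
        intro x
        simp only [Set.indicator_apply, mem_setOf_eq]
      simp_rw [e2]
      rw [lintegral_indicator (hslice y), setLIntegral_one]
    · apply Measurable.aemeasurable
      apply Measurable.indicator measurable_const
      exact hAm
  rw [step2]
  -- step 3: pointwise bound
  have pointwise : ∀ y : ℝ,
      volume {x : AddCircle (1:ℝ) | (y < f (x + h')) ≠ (y < f x)}
        ≤ w y * c⁻¹ + ENNReal.ofReal (2 * Real.sqrt t) := by
    intro y
    by_cases hS : {x : AddCircle (1:ℝ) | f x = y}.Infinite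
    · have htop : w y * c⁻¹ = ⊤ := by
        rw [hw]; simp only [hS, if_true]
        exact ENNReal.top_mul (ENNReal.inv_ne_zero.2 ENNReal.ofReal_ne_top)
      rw [htop]
      exact le_trans le_top le_self_add
    · have hSfin : {x : AddCircle (1:ℝ) | f x = y}.Finite := Set.not_infinite.1 hS
      set n : ℕ := {x : AddCircle (1:ℝ) | f x = y}.ncard with hn
      have hwy : w y = ENNReal.ofReal (Real.sqrt (Real.log n)) := by rw [hw]; simp [hS, hn]
      by_cases hlog : (1/2) * Real.log (1/t) ≤ Real.log n
      · -- big n: measure ≤ 1 ≤ w y / c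
        have h1 : volume {x : AddCircle (1:ℝ) | (y < f (x + h')) ≠ (y < f x)} ≤ 1 := by
          calc volume {x : AddCircle (1:ℝ) | (y < f (x + h')) ≠ (y < f x)}
              ≤ volume (univ : Set (AddCircle (1:ℝ))) := measure_mono (subset_univ _)
            _ = 1 := by rw [AddCircle.measure_univ]; simp
        have h2 : (1:ℝ≥0∞) ≤ w y * c⁻¹ := by
          have hcle : c ≤ ENNReal.ofReal (Real.sqrt (Real.log n)) := by
            rw [hc]
            exact ENNReal.ofReal_le_ofReal (Real.sqrt_le_sqrt hlog)
          calc (1:ℝ≥0∞) = c * c⁻¹ := (ENNReal.mul_inv_cancel hc0 ENNReal.ofReal_ne_top).symm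
            _ ≤ w y * c⁻¹ := mul_le_mul_left (by rw [hwy]; exact hcle) _
        exact le_trans h1 (le_trans h2 le_self_add)
      · -- small n
        have hsq : 0 < Real.sqrt t := Real.sqrt_pos.2 ht0
        have hnlt : (n : ℝ) < (Real.sqrt t)⁻¹ := by
          by_contra hcon
          push_neg at hcon
          have h3 : Real.log ((Real.sqrt t)⁻¹) ≤ Real.log n :=
            Real.log_le_log (inv_pos.2 hsq) hcon
          have h4 : Real.log ((Real.sqrt t)⁻¹) = (1/2) * Real.log (1/t) := by
            rw [Real.log_inv, Real.log_sqrt ht0.le, show (1:ℝ)/t = t⁻¹ from one_div t,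
              Real.log_inv]
            ring
          rw [h4] at h3
          exact hlog h3
        have hnt : (n : ℝ) * (2 * t) ≤ 2 * Real.sqrt t := by
          have h5 : (n : ℝ) * Real.sqrt t < 1 := by
            have := mul_lt_mul_of_pos_right hnlt hsq
            rwa [inv_mul_cancel₀ (ne_of_gt hsq)] at this
          nlinarith [Real.mul_self_sqrt ht0.le, Real.sqrt_nonneg t, Nat.cast_nonneg (α := ℝ) n]
        calc volume {x : AddCircle (1:ℝ) | (y < f (x + h')) ≠ (y < f x)}
            ≤ (n : ℝ≥0∞) * ENNReal.ofReal (2 * t) := measure_diff_le f hf y h t hht hSfin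
          _ = ENNReal.ofReal ((n : ℝ) * (2 * t)) := by
              rw [ENNReal.ofReal_mul (Nat.cast_nonneg _), ENNReal.ofReal_natCast]
          _ ≤ ENNReal.ofReal (2 * Real.sqrt t) := ENNReal.ofReal_le_ofReal hnt
          _ ≤ w y * c⁻¹ + ENNReal.ofReal (2 * Real.sqrt t) := le_add_self
  -- step 4: integrate the bound
  calc (∫⁻ y in Set.Ioo (0:ℝ) 1, volume {x : AddCircle (1:ℝ) | (y < f (x + h')) ≠ (y < f x)})
      ≤ ∫⁻ y in Set.Ioo (0:ℝ) 1, (w y * c⁻¹ + ENNReal.ofReal (2 * Real.sqrt t)) :=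
        lintegral_mono pointwise
    _ = (∫⁻ y in Set.Ioo (0:ℝ) 1, w y * c⁻¹)
        + ∫⁻ _y in Set.Ioo (0:ℝ) 1, ENNReal.ofReal (2 * Real.sqrt t) :=
        lintegral_add_right _ measurable_const
    _ = (∫⁻ y in Set.Ioo (0:ℝ) 1, w y) * c⁻¹ + ENNReal.ofReal (2 * Real.sqrt t) := by
        rw [lintegral_mul_const' _ _ (ENNReal.inv_ne_top.2 hc0), lintegral_const,
          Measure.restrict_apply MeasurableSet.univ, univ_inter, Real.volume_Ioo]
        simp

/-- If `f` is continuous on the circle with `0 ≤ f ≤ 1` and the Banach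
indicatrix `n(y) = #{x : f x = y}` satisfies `∫₀¹ (log n(y))^{1/2} dy < ∞` (integrand `+∞`
when `n(y) = ∞`, and `0` when `n(y) ≤ 1`), then `ω(f,t)_1 = O((log(1/t))^{-1/2})`. -/
theorem stmt_3 (f : AddCircle (1:ℝ) → ℝ) (hf : Continuous f)
    (hf0 : ∀ x, 0 ≤ f x) (hf1 : ∀ x, f x ≤ 1)
    (hint : ∫⁻ y in Set.Ioo (0:ℝ) 1,
      (if {x : AddCircle (1:ℝ) | f x = y}.Infinite then ⊤
       else ENNReal.ofReal (Real.sqrt (Real.log ({x : AddCircle (1:ℝ) | f x = y}.ncard)))) < ⊤) :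
    ∃ C > 0, ∃ t₀ ∈ Set.Ioo (0:ℝ) 1, ∀ t ∈ Set.Ioc (0:ℝ) t₀,
      modulus f 1 t ≤ C * (Real.log (1/t)) ^ (-(1:ℝ)/2) := by
  set I : ℝ≥0∞ := ∫⁻ y in Set.Ioo (0:ℝ) 1,
      (if {x : AddCircle (1:ℝ) | f x = y}.Infinite then ⊤
       else ENNReal.ofReal (Real.sqrt (Real.log ({x : AddCircle (1:ℝ) | f x = y}.ncard)))) with hI
  set K : ℝ := I.toReal with hK
  have hK0 : 0 ≤ K := ENNReal.toReal_nonneg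
  refine ⟨Real.sqrt 2 * K + 1, by positivity, 1/100, by norm_num, ?_⟩
  rintro t ⟨ht0, ht1⟩
  have hL : 0 < Real.log (1/t) := Real.log_pos (by rw [lt_div_iff₀ ht0]; linarith)
  have hsL : 0 < Real.sqrt (Real.log (1/t)) := Real.sqrt_pos.2 hL
  have hc0 : (ENNReal.ofReal (Real.sqrt ((1/2) * Real.log (1/t)))) ≠ 0 := by
    rw [ne_eq, ENNReal.ofReal_eq_zero, not_le]
    exact Real.sqrt_pos.2 (by linarith)
  -- per-h real bound
  have main : ∀ h : ℝ, |h| ≤ t →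
      (∫ x : AddCircle (1:ℝ), |f (x + ((h : ℝ) : AddCircle (1:ℝ))) - f x|)
        ≤ K * (Real.sqrt ((1/2) * Real.log (1/t)))⁻¹ + 2 * Real.sqrt t := by
    intro h hh
    have hb := key_bound f hf hf0 hf1 t h ht0 ht1 hh
    have hmulne : I * (ENNReal.ofReal (Real.sqrt ((1/2) * Real.log (1/t))))⁻¹ ≠ ⊤ :=
      ENNReal.mul_ne_top hint.ne (ENNReal.inv_ne_top.2 hc0)
    have hRne : I * (ENNReal.ofReal (Real.sqrt ((1/2) * Real.log (1/t))))⁻¹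
        + ENNReal.ofReal (2 * Real.sqrt t) ≠ ⊤ :=
      ENNReal.add_ne_top.2 ⟨hmulne, ENNReal.ofReal_ne_top⟩
    have h1 : (∫ x : AddCircle (1:ℝ), |f (x + ((h : ℝ) : AddCircle (1:ℝ))) - f x|)
        = (ENNReal.ofReal
            (∫ x : AddCircle (1:ℝ), |f (x + ((h : ℝ) : AddCircle (1:ℝ))) - f x|)).toReal :=
      (ENNReal.toReal_ofReal (integral_nonneg fun x => abs_nonneg _)).symm
    rw [h1]
    calc (ENNReal.ofReal
            (∫ x : AddCircle (1:ℝ), |f (x + ((h : ℝ) : AddCircle (1:ℝ))) - f x|)).toReal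
        ≤ (I * (ENNReal.ofReal (Real.sqrt ((1/2) * Real.log (1/t))))⁻¹
            + ENNReal.ofReal (2 * Real.sqrt t)).toReal := ENNReal.toReal_mono hRne hb
      _ = K * (Real.sqrt ((1/2) * Real.log (1/t)))⁻¹ + 2 * Real.sqrt t := by
          rw [ENNReal.toReal_add hmulne ENNReal.ofReal_ne_top, ENNReal.toReal_mul,
            ENNReal.toReal_inv, ENNReal.toReal_ofReal (Real.sqrt_nonneg _),
            ENNReal.toReal_ofReal (by positivity)]
  -- arithmetic
  have e1 : (Real.sqrt ((1/2) * Real.log (1/t)))⁻¹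
      = Real.sqrt 2 * (Real.sqrt (Real.log (1/t)))⁻¹ := by
    rw [show (1:ℝ)/2 * Real.log (1/t) = Real.log (1/t) / 2 by ring,
      Real.sqrt_div hL.le, inv_div, div_eq_mul_inv]
  have e2 : (Real.log (1/t)) ^ (-(1:ℝ)/2) = (Real.sqrt (Real.log (1/t)))⁻¹ := by
    rw [show (-(1:ℝ)/2) = -(1/2 : ℝ) by norm_num, Real.rpow_neg hL.le,
      ← Real.sqrt_eq_rpow]
  have hsqt10 : Real.sqrt t ≤ 1/10 := by
    rw [show (1:ℝ)/10 = Real.sqrt (1/100) by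
      rw [show (1:ℝ)/100 = (1/10)^2 by norm_num, Real.sqrt_sq (by norm_num : (0:ℝ) ≤ 1/10)]]
    exact Real.sqrt_le_sqrt ht1
  have hLs : Real.log (1/t) * Real.sqrt t ≤ 2 := by
    have hsq : 0 < Real.sqrt t := Real.sqrt_pos.2 ht0
    have h1' : Real.log (1/t) = 2 * Real.log ((Real.sqrt t)⁻¹) := by
      rw [Real.log_inv, Real.log_sqrt ht0.le, show (1:ℝ)/t = t⁻¹ from one_div t, Real.log_inv]
      ring
    have h2' : Real.log ((Real.sqrt t)⁻¹) ≤ (Real.sqrt t)⁻¹ :=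
      (Real.log_le_sub_one_of_pos (inv_pos.2 hsq)).trans (by linarith)
    have h3' : Real.log ((Real.sqrt t)⁻¹) * Real.sqrt t ≤ 1 := by
      have := mul_le_mul_of_nonneg_right h2' (Real.sqrt_nonneg t)
      rwa [inv_mul_cancel₀ (ne_of_gt hsq)] at this
    rw [h1']
    nlinarith
  have h2sqt : 2 * Real.sqrt t ≤ (Real.sqrt (Real.log (1/t)))⁻¹ := by
    rw [← one_div, le_div_iff₀ hsL]
    nlinarith [Real.sq_sqrt hL.le, Real.sqrt_nonneg (Real.log (1/t)), Real.sqrt_nonneg t,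
      Real.mul_self_sqrt ht0.le, sq_nonneg (Real.sqrt t * Real.sqrt (Real.log (1/t)))]
  have himp : K * (Real.sqrt ((1/2) * Real.log (1/t)))⁻¹ + 2 * Real.sqrt t
      ≤ (Real.sqrt 2 * K + 1) * (Real.log (1/t)) ^ (-(1:ℝ)/2) := by
    rw [e2, e1]
    calc K * (Real.sqrt 2 * (Real.sqrt (Real.log (1/t)))⁻¹) + 2 * Real.sqrt t
        ≤ K * (Real.sqrt 2 * (Real.sqrt (Real.log (1/t)))⁻¹)
          + (Real.sqrt (Real.log (1/t)))⁻¹ := by linarith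
      _ = (Real.sqrt 2 * K + 1) * (Real.sqrt (Real.log (1/t)))⁻¹ := by ring
  -- supremum
  have hne : Nonempty {h : ℝ // |h| ≤ t} := ⟨⟨0, by simpa using ht0.le⟩⟩
  unfold modulus
  apply ciSup_le
  intro h
  have : (∫ x : AddCircle (1:ℝ), |f (x + ((h.1 : ℝ) : AddCircle (1:ℝ))) - f x| ^ (1:ℝ)) ^ (1/(1:ℝ))
      = ∫ x : AddCircle (1:ℝ), |f (x + ((h.1 : ℝ) : AddCircle (1:ℝ))) - f x| := by
    simp [Real.rpow_one]
  rw [this]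
  exact (main h.1 h.2).trans himp
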